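/- Let J be a symmetric positive definite d×d real matrix and A be a d×r real matrix with orthonormal columns (A^T A = I_r). Then (A^T J A)^{-1} ⪯ A^T J^{-1} A in the Loewner order, i.e., A^T J^{-1} A - (A^T J A)^{-1} is positive semidefinite. -/

import Mathlib

open Matrix

/-- Loewner order inequality `(Aᵀ J A)⁻¹ ⪯ Aᵀ J⁻¹ A` for `J` symmetric positive definite
and `A` with orthonormal columns. -/
theorem stmt1 {d r : ℕ} (J : Matrix (Fin d) (Fin d) ℝ) (hJ : J.PosDef)
    (A : Matrix (Fin d) (Fin r) ℝ) (hA : Aᵀ * A = 1) :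
    (Aᵀ * J⁻¹ * A - (Aᵀ * J * A)⁻¹).PosSemidef := by
  have hJsymm : Jᵀ = J := hJ.isHermitian.eq
  -- K := Aᵀ J A is positive definite
  have hK : (Aᵀ * J * A).PosDef := by
    refine posDef_iff_dotProduct_mulVec.mpr ⟨?_, ?_⟩
    · show (Aᵀ * J * A)ᴴ = _
      simp [conjTranspose_mul, Matrix.mul_assoc]
      simp [conjTranspose, hJsymm]
    · intro x hx
      have hAx : A *ᵥ x ≠ 0 := by
        intro h
        apply hx
        have : Aᵀ *ᵥ (A *ᵥ x) = x := by
          rw [mulVec_mulVec, hA, one_mulVec]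
        rw [h, mulVec_zero] at this
        exact this.symm
      have := hJ.dotProduct_mulVec_pos hAx
      simpa [← mulVec_mulVec, dotProduct_mulVec, vecMul_transpose, star_mulVec,
        dotProduct_mulVec] using this
  set K := Aᵀ * J * A with hKdef
  have hKunit : IsUnit K := hK.isUnit
  have hKinvsymm : (K⁻¹)ᵀ = K⁻¹ := hK.inv.isHermitian.eq
  have hJinvsymm : (J⁻¹)ᵀ = J⁻¹ := hJ.inv.isHermitian.eq
  have hJJ : J * J⁻¹ = 1 := mul_nonsing_inv J (isUnit_iff_isUnit_det J |>.mp hJ.isUnit)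
  have hKK : K * K⁻¹ = 1 := mul_nonsing_inv K (isUnit_iff_isUnit_det K |>.mp hKunit)
  have hKK' : K⁻¹ * K = 1 := nonsing_inv_mul K (isUnit_iff_isUnit_det K |>.mp hKunit)
  have key : Aᵀ * J⁻¹ * A - K⁻¹ = (J⁻¹ * A - A * K⁻¹)ᵀ * J * (J⁻¹ * A - A * K⁻¹) := by
    rw [transpose_sub, transpose_mul, transpose_mul, hJinvsymm, hKinvsymm]
    have hJinvJ : J⁻¹ * J = 1 := nonsing_inv_mul J (isUnit_iff_isUnit_det J |>.mp hJ.isUnit)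
    calc Aᵀ * J⁻¹ * A - K⁻¹
        = Aᵀ * J⁻¹ * A - 1 * K⁻¹ - (K⁻¹ * 1 - K⁻¹ * K * K⁻¹) := by
          rw [hKK', one_mul, mul_one, sub_self, sub_zero]
      _ = Aᵀ * J⁻¹ * A - (Aᵀ * A) * K⁻¹ - (K⁻¹ * (Aᵀ * A) - K⁻¹ * (Aᵀ * J * A) * K⁻¹) := by
          rw [hA, hKdef, hKK']
      _ = (Aᵀ * J⁻¹ - K⁻¹ * Aᵀ) * J * (J⁻¹ * A - A * K⁻¹) := by
          simp only [Matrix.sub_mul, Matrix.mul_sub, Matrix.mul_assoc]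
          rw [show J * (J⁻¹ * A) = A by rw [← Matrix.mul_assoc, hJJ, Matrix.one_mul],
            show J⁻¹ * (J * (A * K⁻¹)) = A * K⁻¹ by
              rw [← Matrix.mul_assoc, hJinvJ, Matrix.one_mul]]
          abel
  rw [key]
  have : ((J⁻¹ * A - A * K⁻¹)ᴴ * J * (J⁻¹ * A - A * K⁻¹)).PosSemidef :=
    hJ.posSemidef.conjTranspose_mul_mul_same _
  simpa using this
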